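/- Let μ denote the Möbius function, and let k ≥ 2 be an integer. Suppose that for every ε > 0 there exists a constant C_ε > 0 such that |Σ_{1 ≤ n ≤ x} μ(n)e^{2πi n^k t}| ≤ C_ε·x^{1 − 2^{1−2k} + ε} for all real x ≥ 1 and all t ∈ ℝ (this estimate holds under the Generalized Riemann Hypothesis). Then the Hausdorff dimensions of the graphs {(t, |F_{k,k}(μ;t)|) : t ∈ [0,1]}, {(t, Re F_{k,k}(μ;t)) : t ∈ [0,1]}, and {(t, Im F_{k,k}(μ;t)) : t ∈ [0,1]} in ℝ² are each at most 1 + (1 − 2^{1−2k})/k. -/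

import Mathlib

open Filter Finset Topology Set
open scoped ENNReal NNReal
open MeasureTheory


lemma exp_I_dist (x y : ℝ) :
    ‖Complex.exp ((x:ℂ) * Complex.I) - Complex.exp ((y:ℂ) * Complex.I)‖ ≤ |x - y| := by
  have hd : ∀ u : ℝ, HasDerivAt (fun v : ℝ => Complex.exp ((v:ℂ) * Complex.I))
      (Complex.exp ((u:ℂ) * Complex.I) * Complex.I) u := by
    intro u
    have h1 : HasDerivAt (fun v : ℝ => ((v:ℂ))) 1 u := by
      simpa using (hasDerivAt_id u).ofReal_comp
    have h3 := (h1.mul_const Complex.I).cexp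
    simpa using h3
  have := Convex.norm_image_sub_le_of_norm_hasDerivWithin_le
    (f := fun v : ℝ => Complex.exp ((v:ℂ) * Complex.I))
    (f' := fun u => Complex.exp ((u:ℂ) * Complex.I) * Complex.I) (C := 1) (s := Set.univ)
    (fun u _ => (hd u).hasDerivWithinAt)
    (fun u _ => by
      rw [norm_mul, Complex.norm_exp_ofReal_mul_I,
        Complex.norm_I, mul_one])
    convex_univ (Set.mem_univ y) (Set.mem_univ x)
  simpa [Real.norm_eq_abs] using this

lemma exp_I_sub_one (x : ℝ) : ‖Complex.exp ((x:ℂ) * Complex.I) - 1‖ ≤ |x| := by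
  have := exp_I_dist x 0
  simpa using this

lemma head_weight (b : ℝ) (k n : ℕ) (hk : 1 ≤ k) (hn : 1 ≤ n) :
    ‖(Complex.exp (((b * ((n:ℝ) + 1) ^ k : ℝ) : ℂ) * Complex.I) - 1) / (((((n:ℝ) + 1) ^ k : ℝ)) : ℂ)
      - (Complex.exp (((b * (n:ℝ) ^ k : ℝ) : ℂ) * Complex.I) - 1) / ((((n:ℝ) ^ k : ℝ)) : ℂ)‖
      ≤ 2 * k * |b| / n := by
  have hn1 : (1:ℝ) ≤ (n:ℝ) := by exact_mod_cast hn
  have key := Convex.norm_image_sub_le_of_norm_hasDerivWithin_le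
    (f := fun u : ℝ => (Complex.exp (((b * u ^ k : ℝ) : ℂ) * Complex.I) - 1) / (((u ^ k : ℝ)) : ℂ))
    (f' := fun u : ℝ =>
      ((Complex.exp (((b * u ^ k : ℝ) : ℂ) * Complex.I) * (((b * (↑k * u ^ (k - 1)) : ℝ) : ℂ) * Complex.I))
          * (((u ^ k : ℝ)) : ℂ)
        - (Complex.exp (((b * u ^ k : ℝ) : ℂ) * Complex.I) - 1) * (((↑k * u ^ (k - 1) : ℝ)) : ℂ))
        / ((((u ^ k : ℝ)) : ℂ)) ^ 2)
    (C := 2 * k * |b| / n) (s := Set.Icc (n:ℝ) ((n:ℝ) + 1))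
    (fun x hx => by
      have hx0 : (0:ℝ) < x := lt_of_lt_of_le (by linarith) hx.1
      have hp : HasDerivAt (fun u : ℝ => b * u ^ k) (b * (↑k * x ^ (k - 1))) x :=
        (hasDerivAt_pow k x).const_mul b
      have hnum := ((hp.ofReal_comp.mul_const Complex.I).cexp).sub_const 1
      have hden : HasDerivAt (fun u : ℝ => (((u ^ k : ℝ)) : ℂ)) (((↑k * x ^ (k - 1) : ℝ)) : ℂ) x :=
        (hasDerivAt_pow k x).ofReal_comp
      have hne : ((((x ^ k : ℝ)) : ℂ)) ≠ 0 := by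
        simp only [ne_eq, Complex.ofReal_eq_zero]
        positivity
      exact ((hnum.div hden hne).congr_deriv (by push_cast; ring)).hasDerivWithinAt)
    (fun x hx => by
      have hx0 : (0:ℝ) < x := lt_of_lt_of_le (by linarith) hx.1
      have hxn : (n:ℝ) ≤ x := hx.1
      have hx1 : (1:ℝ) ≤ x := hn1.trans hxn
      obtain ⟨j, rfl⟩ : ∃ j, k = j + 1 := ⟨k - 1, by omega⟩
      simp only [Nat.add_sub_cancel]
      set c : ℝ := ((j + 1 : ℕ) : ℝ) with hc
      have hc0 : (0:ℝ) ≤ c := Nat.cast_nonneg _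
      have hc1 : c = (j:ℝ) + 1 := by rw [hc]; push_cast; ring
      rw [norm_div]
      have hA : ‖Complex.exp (((b * x ^ (j+1) : ℝ) : ℂ) * Complex.I)‖ = 1 := by
        rw [Complex.norm_exp_ofReal_mul_I]
      have hB : ‖((b * (c * x ^ j) : ℝ) : ℂ)‖ = |b| * (c * x ^ j) := by
        rw [Complex.norm_real, Real.norm_eq_abs,
          abs_mul, abs_mul, abs_of_nonneg hc0, abs_of_nonneg (by positivity : (0:ℝ) ≤ x ^ j)]
      have hE : ‖Complex.exp (((b * x ^ (j+1) : ℝ) : ℂ) * Complex.I) - 1‖ ≤ |b| * x ^ (j+1) := by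
        refine le_trans (exp_I_sub_one _) ?_
        rw [abs_mul, abs_of_nonneg (by positivity : (0:ℝ) ≤ x ^ (j+1))]
      have hP : ‖(((x ^ (j+1) : ℝ)) : ℂ)‖ = x ^ (j+1) := by
        rw [Complex.norm_real, Real.norm_eq_abs, abs_of_nonneg (by positivity)]
      have hQ : ‖((c * x ^ j : ℝ) : ℂ)‖ = c * x ^ j := by
        rw [Complex.norm_real, Real.norm_eq_abs, abs_mul, abs_of_nonneg hc0,
          abs_of_nonneg (by positivity : (0:ℝ) ≤ x ^ j)]
      have hnum : ‖Complex.exp (((b * x ^ (j+1) : ℝ) : ℂ) * Complex.I)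
            * (((b * (c * x ^ j) : ℝ) : ℂ) * Complex.I) * (((x ^ (j+1) : ℝ)) : ℂ)
          - (Complex.exp (((b * x ^ (j+1) : ℝ) : ℂ) * Complex.I) - 1) * ((c * x ^ j : ℝ) : ℂ)‖
          ≤ 2 * c * |b| * x ^ (2*j+1) := by
        refine le_trans (norm_sub_le _ _) ?_
        rw [norm_mul, norm_mul, norm_mul, hA, Complex.norm_I, hB, hP, norm_mul, hQ]
        have h2 : ‖Complex.exp (((b * x ^ (j+1) : ℝ) : ℂ) * Complex.I) - 1‖ * (c * x ^ j)
            ≤ (|b| * x ^ (j+1)) * (c * x ^ j) :=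
          mul_le_mul_of_nonneg_right hE (by positivity)
        have hxp : x ^ j * x ^ (j+1) = x ^ (2*j+1) := by
          rw [← pow_add]; congr 1; omega
        rw [← hxp]; linarith [h2]
      have hden : ‖((((x ^ (j+1) : ℝ)) : ℂ)) ^ 2‖ = x ^ (2*j+1) * x := by
        rw [norm_pow, hP, ← pow_mul, ← pow_succ]
        congr 1
        omega
      rw [hden]
      calc _ ≤ (2 * c * |b| * x ^ (2*j+1)) / (x ^ (2*j+1) * x) := by
            gcongr
        _ = 2 * c * |b| / x := by
            rw [show 2 * c * |b| * x ^ (2*j+1) = x ^ (2*j+1) * (2 * c * |b|) by ring,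
              mul_div_mul_left _ _ (by positivity : (x:ℝ) ^ (2*j+1) ≠ 0)]
        _ ≤ 2 * c * |b| / n := by gcongr)
    (convex_Icc _ _)
    (Set.left_mem_Icc.mpr (by linarith))
    (Set.right_mem_Icc.mpr (by linarith))
  have h1 : ‖((n:ℝ) + 1) - (n:ℝ)‖ = 1 := by simp
  rw [h1, mul_one] at key
  exact key



-- |exp(ix) - exp(iy)| ≤ |x - y|
lemma head_term {a : ℝ} (ha0 : 0 < a) (ha1 : a < 1) (n : ℕ) :
    (1 - a) * ((n:ℝ) + 1) ^ (-a) ≤ ((n:ℝ) + 1) ^ (1 - a) - (n:ℝ) ^ (1 - a) := by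
  obtain ⟨c, hc, heq⟩ := exists_hasDerivAt_eq_slope (fun x : ℝ => x ^ (1 - a))
    (fun x => (1 - a) * x ^ (-a)) (show (n:ℝ) < (n:ℝ) + 1 by linarith)
    (fun x hx => (Real.continuousAt_rpow_const x (1 - a)
      (Or.inr (by linarith))).continuousWithinAt)
    (fun x hx => by
      have hx0 : x ≠ 0 := ne_of_gt (lt_of_le_of_lt (Nat.cast_nonneg n) hx.1)
      have := Real.hasDerivAt_rpow_const (x := x) (p := 1 - a) (Or.inl hx0)
      have he : (1:ℝ) - a - 1 = -a := by ring
      rwa [he] at this)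
  have hc0 : 0 < c := lt_of_le_of_lt (Nat.cast_nonneg n) hc.1
  have hmono : ((n:ℝ) + 1) ^ (-a) ≤ c ^ (-a) :=
    Real.rpow_le_rpow_of_nonpos hc0 hc.2.le (by linarith)
  have h1 : (1 - a) * c ^ (-a) = ((n:ℝ) + 1) ^ (1 - a) - (n:ℝ) ^ (1 - a) := by
    rw [heq]; simp
  nlinarith [hmono, h1]

lemma tail_term {a : ℝ} (ha : 1 < a) (n : ℕ) (hn : 1 ≤ n) :
    (a - 1) * ((n:ℝ) + 1) ^ (-a) ≤ (n:ℝ) ^ (1 - a) - ((n:ℝ) + 1) ^ (1 - a) := by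
  have hn0 : (1:ℝ) ≤ (n:ℝ) := by exact_mod_cast hn
  obtain ⟨c, hc, heq⟩ := exists_hasDerivAt_eq_slope (fun x : ℝ => x ^ (1 - a))
    (fun x => (1 - a) * x ^ (-a)) (show (n:ℝ) < (n:ℝ) + 1 by linarith)
    (fun x hx => (Real.continuousAt_rpow_const x (1 - a)
      (Or.inl (by rcases hx with ⟨h1, _⟩; intro h; rw [h] at h1; linarith))).continuousWithinAt)
    (fun x hx => by
      have hx0 : x ≠ 0 := by intro h; rcases hx with ⟨h1, _⟩; rw [h] at h1; linarith
      have := Real.hasDerivAt_rpow_const (x := x) (p := 1 - a) (Or.inl hx0)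
      have he : (1:ℝ) - a - 1 = -a := by ring
      rwa [he] at this)
  have hc0 : 0 < c := lt_of_lt_of_le (by linarith) hc.1.le
  have hmono : ((n:ℝ) + 1) ^ (-a) ≤ c ^ (-a) :=
    Real.rpow_le_rpow_of_nonpos hc0 hc.2.le (by linarith)
  have h1 : (1 - a) * c ^ (-a) = ((n:ℝ) + 1) ^ (1 - a) - (n:ℝ) ^ (1 - a) := by
    rw [heq]; simp
  nlinarith [hmono, h1]

lemma sum_rpow_head {a : ℝ} (ha0 : 0 < a) (ha1 : a < 1) :
    ∀ N : ℕ, ∑ n ∈ Finset.Ioc 0 N, (n:ℝ) ^ (-a) ≤ (N:ℝ) ^ (1 - a) / (1 - a) := by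
  intro N
  induction N with
  | zero => simp [Real.zero_rpow (show (1:ℝ) - a ≠ 0 by linarith)]
  | succ N ih =>
    rw [Finset.sum_Ioc_succ_top (Nat.zero_le N)]
    have ht := head_term ha0 ha1 N
    have hd : (0:ℝ) < 1 - a := by linarith
    have h2 : ((N:ℝ) + 1) ^ (-a) ≤ (((N:ℝ) + 1) ^ (1 - a) - (N:ℝ) ^ (1 - a)) / (1 - a) := by
      rw [le_div_iff₀ hd]; nlinarith [ht]
    have h3 : (N:ℝ) ^ (1 - a) / (1 - a) + (((N:ℝ) + 1) ^ (1 - a) - (N:ℝ) ^ (1 - a)) / (1 - a)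
        = ((N:ℝ) + 1) ^ (1 - a) / (1 - a) := by
      rw [← add_div]; ring_nf
    push_cast
    linarith [ih, h2, h3]

lemma sum_rpow_tail {a : ℝ} (ha : 1 < a) (N : ℕ) (hN : 1 ≤ N) :
    ∀ M : ℕ, ∑ n ∈ Finset.Ioc N M, (n:ℝ) ^ (-a) ≤ (N:ℝ) ^ (1 - a) / (a - 1) := by
  have key : ∀ M : ℕ, ∑ n ∈ Finset.Ioc N M, (n:ℝ) ^ (-a)
      ≤ ((N:ℝ) ^ (1 - a) - ((max M N : ℕ):ℝ) ^ (1 - a)) / (a - 1) := by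
    intro M
    induction M with
    | zero =>
      rw [Finset.Ioc_eq_empty (by omega)]
      simp [max_eq_right hN]
    | succ M ih =>
      rcases le_or_gt (M + 1) N with h | h
      · rw [Finset.Ioc_eq_empty (by omega)]
        rw [max_eq_right (by omega : M + 1 ≤ N)]
        simp
      · have hNM : N ≤ M := by omega
        rw [Finset.sum_Ioc_succ_top hNM]
        rw [max_eq_left (by omega : N ≤ M + 1)]
        rw [max_eq_left hNM] at ih
        have ht := tail_term ha M (le_trans hN hNM)
        have hd : (0:ℝ) < a - 1 := by linarith
        have h2 : ((M:ℝ) + 1) ^ (-a) ≤ ((M:ℝ) ^ (1 - a) - ((M:ℝ) + 1) ^ (1 - a)) / (a - 1) := by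
          rw [le_div_iff₀ hd]; nlinarith [ht]
        have h3 : ((N:ℝ) ^ (1 - a) - (M:ℝ) ^ (1 - a)) / (a - 1)
            + ((M:ℝ) ^ (1 - a) - ((M:ℝ) + 1) ^ (1 - a)) / (a - 1)
            = ((N:ℝ) ^ (1 - a) - ((M:ℝ) + 1) ^ (1 - a)) / (a - 1) := by
          rw [← add_div]; ring_nf
        push_cast
        linarith [ih, h2, h3]
  intro M
  refine le_trans (key M) ?_
  have hd : (0:ℝ) < a - 1 := by linarith
  have h0 : (0:ℝ) ≤ ((max M N : ℕ):ℝ) ^ (1 - a) := Real.rpow_nonneg (Nat.cast_nonneg _) _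
  gcongr
  linarith

-- Abel summation identity
lemma abel_identity (c w : ℕ → ℂ) (N : ℕ) :
    ∀ M, N ≤ M → ∑ n ∈ Finset.Ioc N M, c n * w n
      = (∑ j ∈ Finset.Ioc 0 M, c j) * w (M + 1) - (∑ j ∈ Finset.Ioc 0 N, c j) * w (N + 1)
        + ∑ n ∈ Finset.Ioc N M, (∑ j ∈ Finset.Ioc 0 n, c j) * (w n - w (n + 1)) := by
  intro M
  induction M with
  | zero =>
    intro hN
    interval_cases N
    simp
  | succ M ih =>
    intro hN
    rcases Nat.lt_or_ge M N with h | h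
    · -- N = M + 1
      have hNM : N = M + 1 := by omega
      subst hNM
      simp
    · have e1 := Finset.sum_Ioc_succ_top h (fun n => c n * w n)
      have e2 := Finset.sum_Ioc_succ_top (Nat.zero_le M) c
      have e3 := Finset.sum_Ioc_succ_top h (fun n => (∑ j ∈ Finset.Ioc 0 n, c j) * (w n - w (n + 1)))
      rw [e1, e3, e2, ih h]
      ring



lemma tail_weight_real (k n : ℕ) (hk : 1 ≤ k) (hn : 1 ≤ n) :
    |(((n:ℝ) + 1) ^ k)⁻¹ - ((n:ℝ) ^ k)⁻¹| ≤ k / (n:ℝ) ^ (k + 1) := by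
  have hn1 : (1:ℝ) ≤ (n:ℝ) := by exact_mod_cast hn
  have key := Convex.norm_image_sub_le_of_norm_hasDerivWithin_le
    (f := fun u : ℝ => (u ^ k)⁻¹)
    (f' := fun u : ℝ => -(↑k * u ^ (k - 1)) / (u ^ k) ^ 2)
    (C := k / (n:ℝ) ^ (k + 1)) (s := Set.Icc (n:ℝ) ((n:ℝ) + 1))
    (fun x hx => by
      have hx0 : (0:ℝ) < x := lt_of_lt_of_le (by linarith) hx.1
      exact ((hasDerivAt_pow k x).inv (pow_ne_zero k hx0.ne')).hasDerivWithinAt)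
    (fun x hx => by
      have hx0 : (0:ℝ) < x := lt_of_lt_of_le (by linarith) hx.1
      have hxn : (n:ℝ) ≤ x := hx.1
      rw [Real.norm_eq_abs, abs_div, abs_neg]
      rw [abs_of_nonneg (by positivity), abs_of_nonneg (by positivity)]
      have e1 : (x ^ k) ^ 2 = x ^ (k - 1) * x ^ (k + 1) := by
        rw [← pow_mul, ← pow_add]
        congr 1
        omega
      rw [e1]
      have hxk1 : (0:ℝ) < x ^ (k - 1) := by positivity
      rw [show (↑k * x ^ (k - 1)) = x ^ (k - 1) * ↑k by ring,
        mul_div_mul_left _ _ hxk1.ne']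
      gcongr)
    (convex_Icc _ _)
    (Set.left_mem_Icc.mpr (by linarith))
    (Set.right_mem_Icc.mpr (by linarith))
  have : ‖((n:ℝ) + 1) - (n:ℝ)‖ = 1 := by simp
  rw [this, mul_one] at key
  simpa [Real.norm_eq_abs] using key

lemma tail_weight (k n : ℕ) (hk : 1 ≤ k) (hn : 1 ≤ n) :
    ‖(((((n:ℝ) + 1) ^ k : ℝ)) : ℂ)⁻¹ - ((((n:ℝ) ^ k : ℝ)) : ℂ)⁻¹‖ ≤ k / (n:ℝ) ^ (k + 1) := by
  rw [← Complex.ofReal_inv, ← Complex.ofReal_inv, ← Complex.ofReal_sub, Complex.norm_real,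
    Real.norm_eq_abs]
  exact tail_weight_real k n hk hn



noncomputable def cc (k : ℕ) (t : ℝ) (n : ℕ) : ℂ :=
  (ArithmeticFunction.moebius n : ℂ) *
    Complex.exp (2 * Real.pi * Complex.I * ((n : ℂ) ^ k) * (t : ℂ))

lemma rpow_mono_base {x y p : ℝ} (hx : 0 < x) (hxy : x ≤ y) (hp : p ≤ 0) : y ^ p ≤ x ^ p :=
  Real.rpow_le_rpow_of_nonpos hx hxy hp

lemma tail_est (k : ℕ) (hk : 2 ≤ k) (σ C : ℝ) (hσ0 : 0 < σ) (hσ1 : σ < 1) (hC : 0 < C) (t : ℝ)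
    (hSb : ∀ N : ℕ, 1 ≤ N → ‖∑ n ∈ Finset.Ioc 0 N, cc k t n‖ ≤ C * (N:ℝ) ^ σ)
    (N : ℕ) (hN : 1 ≤ N) (M : ℕ) (hM : N ≤ M) :
    ‖∑ n ∈ Finset.Ioc N M, cc k t n / ((n:ℂ) ^ k)‖
      ≤ C * (2 + k / ((k:ℝ) - σ)) * (N:ℝ) ^ (σ - (k:ℝ)) := by
  have hk1 : 1 ≤ k := by omega
  have hkσ : (0:ℝ) < (k:ℝ) - σ := by
    have : (2:ℝ) ≤ (k:ℝ) := by exact_mod_cast hk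
    linarith
  set w : ℕ → ℂ := fun m => ((((m:ℝ) ^ k : ℝ)) : ℂ)⁻¹ with hw
  have hrw : ∀ n ∈ Finset.Ioc N M, cc k t n / ((n:ℂ) ^ k) = cc k t n * w n := by
    intro n _
    rw [hw, div_eq_mul_inv]
    beta_reduce
    congr 1
    push_cast
    ring_nf
  rw [Finset.sum_congr rfl hrw, abel_identity (cc k t) w N M hM]
  -- norms of the three pieces
  have hwnorm : ∀ m : ℕ, ‖w m‖ = (((m:ℝ) ^ k))⁻¹ := by
    intro m
    show ‖(((((m:ℝ) ^ k : ℝ))) : ℂ)⁻¹‖ = (((m:ℝ) ^ k))⁻¹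
    rw [← Complex.ofReal_inv, Complex.norm_real, Real.norm_eq_abs, abs_of_nonneg (by positivity)]
  have conv : ∀ m : ℕ, 1 ≤ m → ((m:ℝ)) ^ σ * (((m:ℝ)) ^ k)⁻¹ = (m:ℝ) ^ (σ - (k:ℝ)) := by
    intro m hm
    have hm0 : (0:ℝ) < m := by exact_mod_cast hm
    rw [← Real.rpow_natCast (m:ℝ) k, ← Real.rpow_neg hm0.le, ← Real.rpow_add hm0]
    ring_nf
  have hmono : ∀ m : ℕ, N ≤ m → (m:ℝ) ^ (σ - (k:ℝ)) ≤ (N:ℝ) ^ (σ - (k:ℝ)) := by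
    intro m hm
    exact rpow_mono_base (by exact_mod_cast hN) (by exact_mod_cast hm) (by linarith)
  have hT1 : ∀ m : ℕ, N ≤ m → ‖(∑ j ∈ Finset.Ioc 0 m, cc k t j) * w (m + 1)‖
      ≤ C * (N:ℝ) ^ (σ - (k:ℝ)) := by
    intro m hm
    have hm1 : 1 ≤ m := le_trans hN hm
    have hm0 : (0:ℝ) < m := by exact_mod_cast hm1
    rw [norm_mul, hwnorm]
    have h1 : ‖∑ j ∈ Finset.Ioc 0 m, cc k t j‖ ≤ C * (m:ℝ) ^ σ := hSb m hm1
    have h2 : ((((m + 1 : ℕ):ℝ)) ^ k)⁻¹ ≤ (((m:ℝ)) ^ k)⁻¹ := by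
      apply inv_anti₀ (by positivity)
      have hcast : (m:ℝ) ≤ ((m + 1 : ℕ):ℝ) := by push_cast; linarith
      exact pow_le_pow_left₀ hm0.le hcast k
    calc ‖∑ j ∈ Finset.Ioc 0 m, cc k t j‖ * ((((m + 1 : ℕ):ℝ)) ^ k)⁻¹
        ≤ (C * (m:ℝ) ^ σ) * (((m:ℝ)) ^ k)⁻¹ := by
          apply mul_le_mul h1 h2 (by positivity) (by positivity)
      _ = C * ((m:ℝ) ^ σ * (((m:ℝ)) ^ k)⁻¹) := by ring
      _ = C * (m:ℝ) ^ (σ - (k:ℝ)) := by rw [conv m hm1]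
      _ ≤ C * (N:ℝ) ^ (σ - (k:ℝ)) := by
          apply mul_le_mul_of_nonneg_left (hmono m hm) hC.le
  have hT3 : ‖∑ n ∈ Finset.Ioc N M, (∑ j ∈ Finset.Ioc 0 n, cc k t j) * (w n - w (n + 1))‖
      ≤ C * ((k:ℝ) / ((k:ℝ) - σ)) * (N:ℝ) ^ (σ - (k:ℝ)) := by
    refine le_trans (norm_sum_le _ _) ?_
    have hterm : ∀ n ∈ Finset.Ioc N M,
        ‖(∑ j ∈ Finset.Ioc 0 n, cc k t j) * (w n - w (n + 1))‖
          ≤ C * (k:ℝ) * (n:ℝ) ^ (-(((k:ℝ) + 1) - σ)) := by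
      intro n hn
      have hn1 : 1 ≤ n := le_trans hN (Finset.mem_Ioc.mp hn).1.le
      have hn0 : (0:ℝ) < n := by exact_mod_cast hn1
      rw [norm_mul]
      have h1 : ‖∑ j ∈ Finset.Ioc 0 n, cc k t j‖ ≤ C * (n:ℝ) ^ σ := hSb n hn1
      have h2 : ‖w n - w (n + 1)‖ ≤ (k:ℝ) / (n:ℝ) ^ (k + 1) := by
        rw [norm_sub_rev]
        have hcast : (((n + 1 : ℕ):ℝ)) = (n:ℝ) + 1 := by push_cast; ring
        have ht := tail_weight k n hk1 hn1
        show ‖((((((n + 1 : ℕ):ℝ)) ^ k : ℝ)) : ℂ)⁻¹ - ((((n:ℝ) ^ k : ℝ)) : ℂ)⁻¹‖ ≤ _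
        rw [hcast]
        exact ht
      calc ‖∑ j ∈ Finset.Ioc 0 n, cc k t j‖ * ‖w n - w (n + 1)‖
          ≤ (C * (n:ℝ) ^ σ) * ((k:ℝ) / (n:ℝ) ^ (k + 1)) := by
            apply mul_le_mul h1 h2 (norm_nonneg _) (by positivity)
        _ = C * (k:ℝ) * ((n:ℝ) ^ σ * ((n:ℝ) ^ (k + 1))⁻¹) := by ring
        _ = C * (k:ℝ) * (n:ℝ) ^ (-(((k:ℝ) + 1) - σ)) := by
            congr 1
            rw [← Real.rpow_natCast (n:ℝ) (k + 1), ← Real.rpow_neg hn0.le,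
              ← Real.rpow_add hn0]
            push_cast
            ring_nf
    refine le_trans (Finset.sum_le_sum hterm) ?_
    rw [← Finset.mul_sum]
    have hsum := sum_rpow_tail (show (1:ℝ) < ((k:ℝ) + 1) - σ by
      have : (2:ℝ) ≤ (k:ℝ) := by exact_mod_cast hk
      linarith) N hN M
    have heq : (1:ℝ) - (((k:ℝ) + 1) - σ) = σ - (k:ℝ) := by ring
    have heq2 : (((k:ℝ) + 1) - σ) - 1 = (k:ℝ) - σ := by ring
    rw [heq, heq2] at hsum
    calc C * (k:ℝ) * ∑ n ∈ Finset.Ioc N M, (n:ℝ) ^ (-(((k:ℝ) + 1) - σ))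
        ≤ C * (k:ℝ) * ((N:ℝ) ^ (σ - (k:ℝ)) / ((k:ℝ) - σ)) := by
          apply mul_le_mul_of_nonneg_left hsum (by positivity)
      _ = C * ((k:ℝ) / ((k:ℝ) - σ)) * (N:ℝ) ^ (σ - (k:ℝ)) := by ring
  calc ‖(∑ j ∈ Finset.Ioc 0 M, cc k t j) * w (M + 1)
        - (∑ j ∈ Finset.Ioc 0 N, cc k t j) * w (N + 1)
        + ∑ n ∈ Finset.Ioc N M, (∑ j ∈ Finset.Ioc 0 n, cc k t j) * (w n - w (n + 1))‖
      ≤ ‖(∑ j ∈ Finset.Ioc 0 M, cc k t j) * w (M + 1)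
        - (∑ j ∈ Finset.Ioc 0 N, cc k t j) * w (N + 1)‖
        + ‖∑ n ∈ Finset.Ioc N M, (∑ j ∈ Finset.Ioc 0 n, cc k t j) * (w n - w (n + 1))‖ :=
        norm_add_le _ _
    _ ≤ (‖(∑ j ∈ Finset.Ioc 0 M, cc k t j) * w (M + 1)‖
        + ‖(∑ j ∈ Finset.Ioc 0 N, cc k t j) * w (N + 1)‖)
        + ‖∑ n ∈ Finset.Ioc N M, (∑ j ∈ Finset.Ioc 0 n, cc k t j) * (w n - w (n + 1))‖ := by
        gcongr
        exact norm_sub_le _ _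
    _ ≤ (C * (N:ℝ) ^ (σ - (k:ℝ)) + C * (N:ℝ) ^ (σ - (k:ℝ)))
        + C * ((k:ℝ) / ((k:ℝ) - σ)) * (N:ℝ) ^ (σ - (k:ℝ)) :=
        add_le_add (add_le_add (hT1 M hM) (hT1 N le_rfl)) hT3
    _ = C * (2 + (k:ℝ) / ((k:ℝ) - σ)) * (N:ℝ) ^ (σ - (k:ℝ)) := by ring



lemma head_est (k : ℕ) (hk : 2 ≤ k) (σ C : ℝ) (hσ0 : 0 < σ) (hσ1 : σ < 1) (hC : 0 < C)
    (t s : ℝ)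
    (hSb : ∀ N : ℕ, 1 ≤ N → ‖∑ n ∈ Finset.Ioc 0 N, cc k s n‖ ≤ C * (N:ℝ) ^ σ)
    (N : ℕ) (hN : 1 ≤ N) :
    ‖∑ n ∈ Finset.Ioc 0 N, (cc k t n / ((n:ℂ) ^ k) - cc k s n / ((n:ℂ) ^ k))‖
      ≤ 2 * Real.pi * C * (1 + 2 * (k:ℝ) / σ) * |t - s| * (N:ℝ) ^ σ := by
  have hk1 : 1 ≤ k := by omega
  set b : ℝ := 2 * Real.pi * (t - s) with hb
  have hbabs : |b| = 2 * Real.pi * |t - s| := by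
    rw [hb, abs_mul, abs_of_nonneg (by positivity : (0:ℝ) ≤ 2 * Real.pi)]
  set W : ℕ → ℂ := fun m =>
    (Complex.exp (((b * (m:ℝ) ^ k : ℝ) : ℂ) * Complex.I) - 1) / ((((m:ℝ) ^ k : ℝ)) : ℂ) with hW
  have hrw : ∀ n ∈ Finset.Ioc 0 N, cc k t n / ((n:ℂ) ^ k) - cc k s n / ((n:ℂ) ^ k)
      = cc k s n * W n := by
    intro n hn
    have hE : Complex.exp (2 * Real.pi * Complex.I * ((n:ℂ) ^ k) * (t:ℂ))
        = Complex.exp (2 * Real.pi * Complex.I * ((n:ℂ) ^ k) * (s:ℂ))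
          * Complex.exp (((b * (n:ℝ) ^ k : ℝ) : ℂ) * Complex.I) := by
      rw [← Complex.exp_add]
      congr 1
      rw [hb]
      push_cast
      ring
    have hP : ((n:ℂ) ^ k) = (((n:ℝ) ^ k : ℝ) : ℂ) := by push_cast; ring
    show cc k t n / ((n:ℂ) ^ k) - cc k s n / ((n:ℂ) ^ k)
      = cc k s n * ((Complex.exp (((b * (n:ℝ) ^ k : ℝ) : ℂ) * Complex.I) - 1)
          / ((((n:ℝ) ^ k : ℝ)) : ℂ))
    rw [← hP, cc, cc, hE, div_sub_div_same, ← mul_div_assoc]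
    congr 1
    ring
  rw [Finset.sum_congr rfl hrw, abel_identity (cc k s) W 0 N (Nat.zero_le N)]
  have hS0 : (∑ j ∈ Finset.Ioc 0 0, cc k s j) = 0 := by simp
  rw [hS0, zero_mul, sub_zero]
  have hWn : ∀ m : ℕ, 1 ≤ m → ‖W m‖ ≤ |b| := by
    intro m hm
    have hm0 : (0:ℝ) < m := by exact_mod_cast hm
    show ‖(Complex.exp (((b * (m:ℝ) ^ k : ℝ) : ℂ) * Complex.I) - 1) / ((((m:ℝ) ^ k : ℝ)) : ℂ)‖ ≤ |b|
    rw [norm_div]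
    have h1 := exp_I_sub_one (b * (m:ℝ) ^ k)
    have h2 : ‖((((m:ℝ) ^ k : ℝ)) : ℂ)‖ = (m:ℝ) ^ k := by
      rw [Complex.norm_real, Real.norm_eq_abs, abs_of_nonneg (by positivity)]
    rw [h2, div_le_iff₀ (by positivity)]
    refine le_trans h1 ?_
    rw [abs_mul, abs_of_nonneg (by positivity : (0:ℝ) ≤ (m:ℝ) ^ k)]
  have hT1 : ‖(∑ j ∈ Finset.Ioc 0 N, cc k s j) * W (N + 1)‖ ≤ C * |b| * (N:ℝ) ^ σ := by
    rw [norm_mul]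
    calc ‖∑ j ∈ Finset.Ioc 0 N, cc k s j‖ * ‖W (N + 1)‖
        ≤ (C * (N:ℝ) ^ σ) * |b| := by
          apply mul_le_mul (hSb N hN) (hWn (N + 1) (by omega)) (norm_nonneg _) (by positivity)
      _ = C * |b| * (N:ℝ) ^ σ := by ring
  have hT3 : ‖∑ n ∈ Finset.Ioc 0 N, (∑ j ∈ Finset.Ioc 0 n, cc k s j) * (W n - W (n + 1))‖
      ≤ 2 * (k:ℝ) * C * |b| * ((N:ℝ) ^ σ / σ) := by
    refine le_trans (norm_sum_le _ _) ?_
    have hterm : ∀ n ∈ Finset.Ioc 0 N,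
        ‖(∑ j ∈ Finset.Ioc 0 n, cc k s j) * (W n - W (n + 1))‖
          ≤ 2 * (k:ℝ) * C * |b| * (n:ℝ) ^ (-(1 - σ)) := by
      intro n hn
      have hn1 : 1 ≤ n := (Finset.mem_Ioc.mp hn).1
      have hn0 : (0:ℝ) < n := by exact_mod_cast hn1
      rw [norm_mul]
      have h2 : ‖W n - W (n + 1)‖ ≤ 2 * (k:ℝ) * |b| / n := by
        rw [norm_sub_rev]
        have hcast : (((n + 1 : ℕ):ℝ)) = (n:ℝ) + 1 := by push_cast; ring
        have hw := head_weight b k n hk1 hn1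
        show ‖(Complex.exp (((b * ((n + 1 : ℕ):ℝ) ^ k : ℝ) : ℂ) * Complex.I) - 1)
              / (((((n + 1 : ℕ):ℝ) ^ k : ℝ)) : ℂ)
            - (Complex.exp (((b * (n:ℝ) ^ k : ℝ) : ℂ) * Complex.I) - 1)
              / ((((n:ℝ) ^ k : ℝ)) : ℂ)‖ ≤ 2 * (k:ℝ) * |b| / (n:ℝ)
        rw [hcast]
        exact hw
      calc ‖∑ j ∈ Finset.Ioc 0 n, cc k s j‖ * ‖W n - W (n + 1)‖
          ≤ (C * (n:ℝ) ^ σ) * (2 * (k:ℝ) * |b| / n) := by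
            apply mul_le_mul (hSb n hn1) h2 (norm_nonneg _) (by positivity)
        _ = 2 * (k:ℝ) * C * |b| * ((n:ℝ) ^ σ * ((n:ℝ))⁻¹) := by ring
        _ = 2 * (k:ℝ) * C * |b| * (n:ℝ) ^ (-(1 - σ)) := by
            congr 1
            nth_rewrite 2 [show ((n:ℝ)) = ((n:ℝ)) ^ (1:ℝ) from (Real.rpow_one _).symm]
            rw [← Real.rpow_neg hn0.le, ← Real.rpow_add hn0]
            ring_nf
    refine le_trans (Finset.sum_le_sum hterm) ?_
    rw [← Finset.mul_sum]
    have hsum := sum_rpow_head (show (0:ℝ) < 1 - σ by linarith) (show 1 - σ < 1 by linarith) N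
    have heq : (1:ℝ) - (1 - σ) = σ := by ring
    rw [heq] at hsum
    apply mul_le_mul_of_nonneg_left hsum (by positivity)
  calc ‖(∑ j ∈ Finset.Ioc 0 N, cc k s j) * W (N + 1)
        + ∑ n ∈ Finset.Ioc 0 N, (∑ j ∈ Finset.Ioc 0 n, cc k s j) * (W n - W (n + 1))‖
      ≤ ‖(∑ j ∈ Finset.Ioc 0 N, cc k s j) * W (N + 1)‖
        + ‖∑ n ∈ Finset.Ioc 0 N, (∑ j ∈ Finset.Ioc 0 n, cc k s j) * (W n - W (n + 1))‖ :=
        norm_add_le _ _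
    _ ≤ C * |b| * (N:ℝ) ^ σ + 2 * (k:ℝ) * C * |b| * ((N:ℝ) ^ σ / σ) := add_le_add hT1 hT3
    _ = C * (1 + 2 * (k:ℝ) / σ) * |b| * (N:ℝ) ^ σ := by field_simp
    _ = 2 * Real.pi * C * (1 + 2 * (k:ℝ) / σ) * |t - s| * (N:ℝ) ^ σ := by rw [hbabs]; ring



lemma rpow_mono_base' {x y p : ℝ} (hx : 0 < x) (hxy : x ≤ y) (hp : p ≤ 0) : y ^ p ≤ x ^ p :=
  Real.rpow_le_rpow_of_nonpos hx hxy hp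

lemma holder_est (k : ℕ) (hk : 2 ≤ k) (σ C : ℝ) (hσ0 : 0 < σ) (hσ1 : σ < 1) (hC : 0 < C)
    (F : ℝ → ℂ)
    (hSb : ∀ t : ℝ, ∀ N : ℕ, 1 ≤ N → ‖∑ n ∈ Finset.Ioc 0 N, cc k t n‖ ≤ C * (N:ℝ) ^ σ)
    (hF : ∀ t : ℝ, Tendsto (fun N : ℕ => ∑ n ∈ Finset.Ioc 0 N, cc k t n / ((n:ℂ) ^ k))
      atTop (𝓝 (F t))) :
    ∃ K : ℝ, 0 < K ∧ ∀ t s : ℝ, |t - s| ≤ 1 →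
      ‖F t - F s‖ ≤ K * |t - s| ^ (((k:ℝ) - σ) / (k:ℝ)) := by
  have hk0 : (0:ℝ) < (k:ℝ) := by
    have : (0:ℕ) < k := by omega
    exact_mod_cast this
  have hkσ : (0:ℝ) < (k:ℝ) - σ := by
    have : (2:ℝ) ≤ (k:ℝ) := by exact_mod_cast hk
    linarith
  have hα0 : (0:ℝ) < ((k:ℝ) - σ) / (k:ℝ) := by positivity
  set D1 : ℝ := C * (2 + (k:ℝ) / ((k:ℝ) - σ)) with hD1
  set D2 : ℝ := 2 * Real.pi * C * (1 + 2 * (k:ℝ) / σ) with hD2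
  have hD1p : 0 < D1 := by rw [hD1]; positivity
  have hD2p : 0 < D2 := by rw [hD2]; positivity
  refine ⟨2 * D1 + 2 * D2, by positivity, ?_⟩
  intro t s hts
  rcases eq_or_ne t s with rfl | hne
  · simp [sub_self, abs_zero, Real.zero_rpow hα0.ne']
  have hh0 : (0:ℝ) < |t - s| := abs_pos.mpr (sub_ne_zero.mpr hne)
  set h : ℝ := |t - s| with hhdef
  set R : ℝ := h ^ (-(1:ℝ) / (k:ℝ)) with hR
  have hRpos : 0 < R := Real.rpow_pos_of_pos hh0 _
  have hR1 : 1 ≤ R :=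
    Real.one_le_rpow_of_pos_of_le_one_of_nonpos hh0 hts (by
      apply div_nonpos_of_nonpos_of_nonneg <;> simp [hk0.le])
  set N : ℕ := ⌈R⌉₊ with hNdef
  have hN1 : 1 ≤ N := Nat.one_le_ceil_iff.mpr hRpos
  have hNR : R ≤ (N:ℝ) := Nat.le_ceil R
  have hN2R : (N:ℝ) ≤ 2 * R := by
    have := Nat.ceil_lt_add_one hRpos.le
    linarith
  -- tail estimate for the limit
  have tailF : ∀ u : ℝ, ‖F u - ∑ n ∈ Finset.Ioc 0 N, cc k u n / ((n:ℂ) ^ k)‖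
      ≤ D1 * (N:ℝ) ^ (σ - (k:ℝ)) := by
    intro u
    have hlim : Tendsto (fun M : ℕ => (∑ n ∈ Finset.Ioc 0 M, cc k u n / ((n:ℂ) ^ k))
        - ∑ n ∈ Finset.Ioc 0 N, cc k u n / ((n:ℂ) ^ k)) atTop
        (𝓝 (F u - ∑ n ∈ Finset.Ioc 0 N, cc k u n / ((n:ℂ) ^ k))) :=
      (hF u).sub_const _
    refine le_of_tendsto hlim.norm ?_
    filter_upwards [eventually_ge_atTop N] with M hM
    have hsplit := Finset.sum_Ioc_consecutive (fun n => cc k u n / ((n:ℂ) ^ k))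
      (Nat.zero_le N) hM
    have : (∑ n ∈ Finset.Ioc 0 M, cc k u n / ((n:ℂ) ^ k))
        - ∑ n ∈ Finset.Ioc 0 N, cc k u n / ((n:ℂ) ^ k)
        = ∑ n ∈ Finset.Ioc N M, cc k u n / ((n:ℂ) ^ k) := by
      rw [← hsplit]; ring
    rw [this]
    exact tail_est k hk σ C hσ0 hσ1 hC u (hSb u) N hN1 M hM
  -- head estimate
  have headF : ‖(∑ n ∈ Finset.Ioc 0 N, cc k t n / ((n:ℂ) ^ k))
      - ∑ n ∈ Finset.Ioc 0 N, cc k s n / ((n:ℂ) ^ k)‖ ≤ D2 * h * (N:ℝ) ^ σ := by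
    rw [← Finset.sum_sub_distrib]
    exact head_est k hk σ C hσ0 hσ1 hC t s (hSb s) N hN1
  -- exponent computations
  have hb1 : (N:ℝ) ^ (σ - (k:ℝ)) ≤ h ^ (((k:ℝ) - σ) / (k:ℝ)) := by
    have h1 : (N:ℝ) ^ (σ - (k:ℝ)) ≤ R ^ (σ - (k:ℝ)) :=
      rpow_mono_base' hRpos hNR (by linarith)
    have h2 : R ^ (σ - (k:ℝ)) = h ^ (((k:ℝ) - σ) / (k:ℝ)) := by
      rw [hR, ← Real.rpow_mul hh0.le]
      congr 1
      field_simp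
      ring
    rw [← h2]; exact h1
  have hb2 : h * (N:ℝ) ^ σ ≤ 2 * h ^ (((k:ℝ) - σ) / (k:ℝ)) := by
    have h1 : (N:ℝ) ^ σ ≤ (2 * R) ^ σ :=
      Real.rpow_le_rpow (Nat.cast_nonneg N) hN2R hσ0.le
    have h2 : (2 * R) ^ σ = 2 ^ σ * R ^ σ := Real.mul_rpow (by norm_num) hRpos.le
    have h3 : (2:ℝ) ^ σ ≤ 2 := by
      nth_rewrite 2 [show (2:ℝ) = 2 ^ (1:ℝ) from (Real.rpow_one 2).symm]
      exact Real.rpow_le_rpow_of_exponent_le one_le_two hσ1.le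
    have h4 : h * R ^ σ = h ^ (((k:ℝ) - σ) / (k:ℝ)) := by
      rw [hR, ← Real.rpow_mul hh0.le]
      nth_rewrite 1 [show h = h ^ (1:ℝ) from (Real.rpow_one h).symm]
      rw [← Real.rpow_add hh0]
      congr 1
      field_simp
      ring
    have hRσ : 0 ≤ R ^ σ := (Real.rpow_pos_of_pos hRpos σ).le
    calc h * (N:ℝ) ^ σ ≤ h * ((2 ^ σ) * R ^ σ) := by
          rw [← h2]
          exact mul_le_mul_of_nonneg_left h1 hh0.le
      _ ≤ h * (2 * R ^ σ) := by
          apply mul_le_mul_of_nonneg_left _ hh0.le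
          exact mul_le_mul_of_nonneg_right h3 hRσ
      _ = 2 * (h * R ^ σ) := by ring
      _ = 2 * h ^ (((k:ℝ) - σ) / (k:ℝ)) := by rw [h4]
  calc ‖F t - F s‖
      = ‖(F t - ∑ n ∈ Finset.Ioc 0 N, cc k t n / ((n:ℂ) ^ k))
        + ((∑ n ∈ Finset.Ioc 0 N, cc k t n / ((n:ℂ) ^ k))
            - ∑ n ∈ Finset.Ioc 0 N, cc k s n / ((n:ℂ) ^ k))
        + (∑ n ∈ Finset.Ioc 0 N, cc k s n / ((n:ℂ) ^ k) - F s)‖ := by congr 1; ring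
    _ ≤ ‖(F t - ∑ n ∈ Finset.Ioc 0 N, cc k t n / ((n:ℂ) ^ k))
        + ((∑ n ∈ Finset.Ioc 0 N, cc k t n / ((n:ℂ) ^ k))
            - ∑ n ∈ Finset.Ioc 0 N, cc k s n / ((n:ℂ) ^ k))‖
        + ‖∑ n ∈ Finset.Ioc 0 N, cc k s n / ((n:ℂ) ^ k) - F s‖ := norm_add_le _ _
    _ ≤ (‖F t - ∑ n ∈ Finset.Ioc 0 N, cc k t n / ((n:ℂ) ^ k)‖
        + ‖(∑ n ∈ Finset.Ioc 0 N, cc k t n / ((n:ℂ) ^ k))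
            - ∑ n ∈ Finset.Ioc 0 N, cc k s n / ((n:ℂ) ^ k)‖)
        + ‖∑ n ∈ Finset.Ioc 0 N, cc k s n / ((n:ℂ) ^ k) - F s‖ := by
        gcongr
        exact norm_add_le _ _
    _ ≤ (D1 * (N:ℝ) ^ (σ - (k:ℝ)) + D2 * h * (N:ℝ) ^ σ) + D1 * (N:ℝ) ^ (σ - (k:ℝ)) := by
        refine add_le_add (add_le_add (tailF t) headF) ?_
        rw [norm_sub_rev]
        exact tailF s
    _ ≤ (D1 * h ^ (((k:ℝ) - σ) / (k:ℝ)) + D2 * (2 * h ^ (((k:ℝ) - σ) / (k:ℝ))))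
        + D1 * h ^ (((k:ℝ) - σ) / (k:ℝ)) := by
        refine add_le_add (add_le_add ?_ ?_) ?_
        · exact mul_le_mul_of_nonneg_left hb1 hD1p.le
        · rw [mul_assoc]
          exact mul_le_mul_of_nonneg_left hb2 hD2p.le
        · exact mul_le_mul_of_nonneg_left hb1 hD1p.le
    _ = (2 * D1 + 2 * D2) * h ^ (((k:ℝ) - σ) / (k:ℝ)) := by ring



lemma diam_box_le {a b c d δ : ℝ} (h1 : b - a ≤ δ) (h2 : d - c ≤ δ) :
    EMetric.diam (Set.Icc a b ×ˢ Set.Icc c d) ≤ ENNReal.ofReal δ := by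
  apply EMetric.diam_le
  rintro ⟨p, q⟩ ⟨hp, hq⟩ ⟨p', q'⟩ ⟨hp', hq'⟩
  simp only [Set.mem_Icc] at hp hq hp' hq'
  rw [Prod.edist_eq, max_le_iff]
  constructor <;>
  · rw [edist_dist, Real.dist_eq]
    apply ENNReal.ofReal_le_ofReal
    rw [abs_le]
    constructor <;> linarith [hp.1, hp.2, hp'.1, hp'.2, hq.1, hq.2, hq'.1, hq'.2]

lemma graph_dimH_le (f : ℝ → ℝ) (α K : ℝ) (hα0 : 0 < α) (hα1 : α ≤ 1) (hK : 0 ≤ K)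
    (hf : ∀ s ∈ Set.Icc (0:ℝ) 1, ∀ t ∈ Set.Icc (0:ℝ) 1, |f t - f s| ≤ K * |t - s| ^ α) :
    dimH {q : ℝ × ℝ | q.1 ∈ Set.Icc (0 : ℝ) 1 ∧ q.2 = f q.1} ≤ ENNReal.ofReal (2 - α) := by
  have h2α : (0:ℝ) ≤ 2 - α := by linarith
  have hcoe : ENNReal.ofReal (2 - α) = ((2 - α).toNNReal : ℝ≥0∞) := rfl
  rw [hcoe]
  apply dimH_le_of_hausdorffMeasure_ne_top
  rw [Real.coe_toNNReal _ h2α]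
  set G := {q : ℝ × ℝ | q.1 ∈ Set.Icc (0 : ℝ) 1 ∧ q.2 = f q.1} with hG
  set P : ℕ → ℕ := fun m => ⌊2 * K * (m:ℝ) ^ ((1:ℝ) - α)⌋₊ + 1 with hP
  set y : ℕ → ℕ → ℝ := fun m j => f ((j:ℝ)/m) - K * ((1:ℝ)/m) ^ α with hy
  set T : ∀ m : ℕ, Fin m × Fin (P m) → Set (ℝ × ℝ) := fun m ji =>
    Set.Icc ((ji.1 : ℝ)/m) (((ji.1 : ℝ) + 1)/m) ×ˢ
      Set.Icc (y m ji.1 + (ji.2 : ℝ)/m) (y m ji.1 + ((ji.2 : ℝ) + 1)/m) with hT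
  have hdiam : ∀ m : ℕ, ∀ i : Fin m × Fin (P m),
      EMetric.diam (T m i) ≤ ENNReal.ofReal (1/m) := by
    intro m ⟨j, i⟩
    apply diam_box_le <;> · push_cast; ring_nf; rfl
  have key : μH[2 - α] G ≤
      liminf (fun m => ∑ i, EMetric.diam (T m i) ^ (2 - α)) atTop := by
    apply MeasureTheory.Measure.hausdorffMeasure_le_liminf_sum (2 - α) G
      (fun m : ℕ => ENNReal.ofReal (1/m))
    · rw [show (0:ℝ≥0∞) = ENNReal.ofReal 0 by simp]
      exact ENNReal.tendsto_ofReal tendsto_one_div_atTop_nhds_zero_nat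
    · filter_upwards with m; exact hdiam m
    · -- covering
      filter_upwards [eventually_ge_atTop 1] with m hm
      rintro ⟨q1, q2⟩ ⟨hq1, hq2⟩
      simp only [Set.mem_Icc] at hq1
      have hm0 : (0:ℝ) < m := by exact_mod_cast hm
      set jn : ℕ := min ⌊q1 * m⌋₊ (m - 1) with hjn
      have hjm : jn < m := lt_of_le_of_lt (min_le_right _ _) (by omega)
      have hj1 : (jn : ℝ)/m ≤ q1 := by
        rw [div_le_iff₀ hm0]
        calc (jn : ℝ) ≤ ⌊q1 * m⌋₊ := by exact_mod_cast min_le_left _ _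
          _ ≤ q1 * m := Nat.floor_le (mul_nonneg hq1.1 hm0.le)
      have hj2 : q1 ≤ ((jn : ℝ) + 1)/m := by
        rw [le_div_iff₀ hm0]
        rcases le_or_gt ⌊q1 * m⌋₊ (m-1) with h | h
        · rw [hjn, min_eq_left h]
          exact (Nat.lt_floor_add_one (q1 * m)).le
        · rw [hjn, min_eq_right h.le]
          have h1 : ((m - 1 : ℕ) : ℝ) = (m:ℝ) - 1 := by
            have := Nat.cast_sub (by omega : 1 ≤ m) (R := ℝ); simpa using this
          rw [h1]
          nlinarith [hq1.2]
      have hjnm : (jn : ℝ)/m ∈ Set.Icc (0:ℝ) 1 := by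
        constructor
        · positivity
        · rw [div_le_one hm0]
          have : (jn:ℝ) ≤ (m:ℝ) - 1 := by
            have : (jn:ℝ) + 1 ≤ m := by exact_mod_cast hjm
            linarith
          linarith
      have hdist : |q1 - (jn:ℝ)/m| ≤ 1/m := by
        rw [abs_le]
        have h1m : (0:ℝ) ≤ 1/m := by positivity
        constructor
        · linarith
        · have : q1 - (jn:ℝ)/m ≤ ((jn:ℝ)+1)/m - (jn:ℝ)/m := by linarith
          calc q1 - (jn:ℝ)/m ≤ ((jn:ℝ)+1)/m - (jn:ℝ)/m := this
            _ = 1/m := by ring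
      have hfd : |f q1 - f ((jn:ℝ)/m)| ≤ K * ((1:ℝ)/m) ^ α := by
        refine le_trans (hf _ hjnm q1 (Set.mem_Icc.mpr hq1)) ?_
        apply mul_le_mul_of_nonneg_left _ hK
        exact Real.rpow_le_rpow (abs_nonneg _) hdist hα0.le
      have hylb : y m jn ≤ f q1 := by
        rw [hy]
        have := (abs_le.mp hfd).2
        linarith [(abs_le.mp hfd).1, (abs_le.mp hfd).2]
      have hyub : f q1 ≤ y m jn + 2 * K * ((1:ℝ)/m) ^ α := by
        rw [hy]
        linarith [(abs_le.mp hfd).2]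
      set i : ℕ := ⌊(f q1 - y m jn) * m⌋₊ with hi
      have hrw : ((1:ℝ)/m) ^ α * m = (m:ℝ) ^ ((1:ℝ) - α) := by
        have : ((1:ℝ)/m) ^ α = (m:ℝ) ^ (-α) := by
          rw [one_div, ← Real.rpow_neg_one (m:ℝ), ← Real.rpow_mul hm0.le]
          ring_nf
        rw [this]
        nth_rewrite 2 [show (m:ℝ) = (m:ℝ) ^ (1:ℝ) from (Real.rpow_one _).symm]
        rw [← Real.rpow_add hm0]
        ring_nf
      have hilt : i < P m := by
        have h1 : (f q1 - y m jn) * m ≤ 2 * K * ((1:ℝ)/m) ^ α * m := by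
          have := hyub; nlinarith [hm0]
        have h2 : (f q1 - y m jn) * m ≤ 2 * K * ((m:ℝ) ^ ((1:ℝ) - α)) := by
          calc (f q1 - y m jn) * m ≤ 2 * K * ((1:ℝ)/m) ^ α * m := h1
            _ = 2 * K * (((1:ℝ)/m) ^ α * m) := by ring
            _ = 2 * K * ((m:ℝ) ^ ((1:ℝ) - α)) := by rw [hrw]
        calc i ≤ ⌊2 * K * (m:ℝ) ^ ((1:ℝ) - α)⌋₊ := Nat.floor_le_floor h2
          _ < ⌊2 * K * (m:ℝ) ^ ((1:ℝ) - α)⌋₊ + 1 := Nat.lt_succ_self _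
      refine Set.mem_iUnion.mpr ⟨⟨⟨jn, hjm⟩, ⟨i, hilt⟩⟩, ?_⟩
      rw [hT]
      refine Set.mem_prod.mpr ⟨Set.mem_Icc.mpr ⟨hj1, ?_⟩, Set.mem_Icc.mpr ⟨?_, ?_⟩⟩
      · exact hj2
      · have hge : (0:ℝ) ≤ (f q1 - y m jn) * m := mul_nonneg (by linarith) hm0.le
        have := Nat.floor_le hge
        have hile : (i:ℝ) / m ≤ f q1 - y m jn := by
          rw [div_le_iff₀ hm0]; exact this
        have hq2' : q2 = f q1 := hq2
        show y m jn + (i:ℝ)/m ≤ q2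
        rw [hq2']
        linarith [hile]
      · have := Nat.lt_floor_add_one ((f q1 - y m jn) * m)
        have h2 : f q1 - y m jn ≤ ((i:ℝ) + 1) / m := by
          rw [le_div_iff₀ hm0]
          exact le_of_lt (by exact_mod_cast Nat.lt_floor_add_one ((f q1 - y m jn) * m))
        have hq2' : q2 = f q1 := hq2
        show q2 ≤ y m jn + ((i:ℝ) + 1)/m
        rw [hq2']
        linarith [h2]
  -- now bound the liminf
  have hbound : ∀ m : ℕ, 1 ≤ m →
      (∑ i, EMetric.diam (T m i) ^ (2 - α)) ≤ ENNReal.ofReal (2 * K + 2) := by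
    intro m hm
    have hm0 : (0:ℝ) < m := by exact_mod_cast hm
    have hstep : (∑ i, EMetric.diam (T m i) ^ (2 - α)) ≤
        (Finset.univ : Finset (Fin m × Fin (P m))).card • (ENNReal.ofReal (1/m)) ^ ((2:ℝ) - α) := by
      apply Finset.sum_le_card_nsmul
      intro x _
      exact ENNReal.rpow_le_rpow (hdiam m x) h2α
    have hcard : (Finset.univ : Finset (Fin m × Fin (P m))).card = m * P m := by
      simp [Finset.card_univ]
    rw [hcard, nsmul_eq_mul] at hstep
    refine le_trans hstep ?_
    rw [ENNReal.ofReal_rpow_of_pos (by positivity), ← ENNReal.ofReal_natCast (m * P m),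
      ← ENNReal.ofReal_mul (by positivity)]
    apply ENNReal.ofReal_le_ofReal
    have hPle : ((P m : ℕ) : ℝ) ≤ 2 * K * (m:ℝ) ^ ((1:ℝ) - α) + 1 := by
      rw [hP]
      push_cast
      have := Nat.floor_le (show (0:ℝ) ≤ 2 * K * (m:ℝ) ^ ((1:ℝ) - α) by positivity)
      linarith
    have hmne : ((1:ℝ)/m) ^ ((2:ℝ) - α) = (m:ℝ) ^ (α - 2) := by
      rw [one_div, ← Real.rpow_neg_one (m:ℝ), ← Real.rpow_mul hm0.le]
      ring_nf
    have key1 : (m:ℝ) ^ ((1:ℝ) - α) * (m:ℝ) ^ (α - 2) * (m:ℝ) = 1 := by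
      nth_rewrite 3 [show (m:ℝ) = (m:ℝ) ^ (1:ℝ) from (Real.rpow_one _).symm]
      rw [← Real.rpow_add hm0, ← Real.rpow_add hm0]
      norm_num
    have key2 : (m:ℝ) * (m:ℝ) ^ (α - 2) ≤ 1 := by
      nth_rewrite 1 [show (m:ℝ) = (m:ℝ) ^ (1:ℝ) from (Real.rpow_one _).symm]
      rw [← Real.rpow_add hm0]
      apply Real.rpow_le_one_of_one_le_of_nonpos (by exact_mod_cast hm) (by linarith)
    have hx : (0:ℝ) ≤ (m:ℝ) ^ (α - 2) := Real.rpow_nonneg hm0.le _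
    rw [Nat.cast_mul, hmne]
    have hPm0 : (0:ℝ) ≤ (m:ℝ) ^ ((1:ℝ) - α) := Real.rpow_nonneg hm0.le _
    calc (m:ℝ) * (P m : ℝ) * (m:ℝ) ^ (α - 2)
        ≤ (m:ℝ) * (2 * K * (m:ℝ) ^ ((1:ℝ) - α) + 1) * (m:ℝ) ^ (α - 2) := by
          apply mul_le_mul_of_nonneg_right _ hx
          apply mul_le_mul_of_nonneg_left hPle hm0.le
      _ = 2 * K * ((m:ℝ) ^ ((1:ℝ) - α) * (m:ℝ) ^ (α - 2) * (m:ℝ)) + (m:ℝ) * (m:ℝ) ^ (α - 2) := by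
          ring
      _ ≤ 2 * K * 1 + 1 := by
          rw [key1]
          linarith [key2]
      _ ≤ 2 * K + 2 := by linarith
  have hliminf : liminf (fun m => ∑ i, EMetric.diam (T m i) ^ (2 - α)) atTop ≤
      ENNReal.ofReal (2 * K + 2) := by
    have hev : ∀ᶠ m in atTop, (∑ i, EMetric.diam (T m i) ^ (2 - α)) ≤
        ENNReal.ofReal (2 * K + 2) := by
      filter_upwards [eventually_ge_atTop 1] with m hm
      exact hbound m hm
    have := Filter.liminf_le_liminf hev
    rwa [Filter.liminf_const] at this
  exact ne_top_of_le_ne_top (by simp : ENNReal.ofReal (2*K+2) ≠ ⊤) (le_trans key hliminf)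


/-- For an integer `k ≥ 2`, assuming the (GRH-conditional) bound
`|∑_{1 ≤ n ≤ x} μ(n) e^{2πi n^k t}| ≤ C_ε x^{1 − 2^{1−2k} + ε}` for every `ε > 0`, the
Hausdorff dimensions of the graphs of `|F_{k,k}(μ;·)|`, `Re F_{k,k}(μ;·)`,
`Im F_{k,k}(μ;·)` over `[0,1]` are each at most `1 + (1 − 2^{1−2k})/k`. -/
theorem stmt_18 (k : ℕ) (hk : 2 ≤ k)
    (hS : ∀ ε : ℝ, 0 < ε → ∃ Cε : ℝ, 0 < Cε ∧ ∀ x : ℝ, 1 ≤ x → ∀ t : ℝ,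
      ‖∑ n ∈ Finset.Icc 1 ⌊x⌋₊,
        (ArithmeticFunction.moebius n : ℂ) *
          Complex.exp (2 * Real.pi * Complex.I * ((n : ℂ) ^ k) * (t : ℂ))‖
        ≤ Cε * x ^ (1 - (2 : ℝ) ^ (1 - 2 * (k : ℝ)) + ε))
    (F : ℝ → ℂ)
    (hF : ∀ t : ℝ, Tendsto (fun N : ℕ => ∑ n ∈ Finset.Icc 1 N,
        (ArithmeticFunction.moebius n : ℂ) *
          Complex.exp (2 * Real.pi * Complex.I * ((n : ℂ) ^ k) * (t : ℂ)) / ((n : ℂ) ^ k))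
      atTop (𝓝 (F t))) :
    dimH {q : ℝ × ℝ | q.1 ∈ Set.Icc (0 : ℝ) 1 ∧ q.2 = ‖F q.1‖}
        ≤ ENNReal.ofReal (1 + (1 - (2 : ℝ) ^ (1 - 2 * (k : ℝ))) / k) ∧
    dimH {q : ℝ × ℝ | q.1 ∈ Set.Icc (0 : ℝ) 1 ∧ q.2 = (F q.1).re}
        ≤ ENNReal.ofReal (1 + (1 - (2 : ℝ) ^ (1 - 2 * (k : ℝ))) / k) ∧
    dimH {q : ℝ × ℝ | q.1 ∈ Set.Icc (0 : ℝ) 1 ∧ q.2 = (F q.1).im}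
        ≤ ENNReal.ofReal (1 + (1 - (2 : ℝ) ^ (1 - 2 * (k : ℝ))) / k) := by
  have hk2 : (2:ℝ) ≤ (k:ℝ) := by exact_mod_cast hk
  have hk0 : (0:ℝ) < (k:ℝ) := by linarith
  set θ : ℝ := (2 : ℝ) ^ (1 - 2 * (k : ℝ)) with hθ
  have hθ0 : 0 < θ := Real.rpow_pos_of_pos two_pos _
  have hθ1 : θ < 1 := Real.rpow_lt_one_of_one_lt_of_neg one_lt_two (by linarith)
  have main : ∀ g : ℝ → ℝ, (∀ t s : ℝ, |g t - g s| ≤ ‖F t - F s‖) →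
      dimH {q : ℝ × ℝ | q.1 ∈ Set.Icc (0:ℝ) 1 ∧ q.2 = g q.1}
        ≤ ENNReal.ofReal (1 + (1 - θ) / k) := by
    intro g hg
    apply ENNReal.le_of_forall_pos_le_add
    intro δ hδ _
    have hδ0 : (0:ℝ) < (δ:ℝ) := hδ
    set ε : ℝ := min (θ/2) ((k:ℝ) * δ) with hε
    have hε0 : 0 < ε := lt_min (by linarith) (by positivity)
    have hεθ : ε < θ := lt_of_le_of_lt (min_le_left _ _) (by linarith)
    obtain ⟨C, hC, hSbound⟩ := hS ε hε0
    set σ : ℝ := 1 - θ + ε with hσ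
    have hσ0 : 0 < σ := by rw [hσ]; linarith
    have hσ1 : σ < 1 := by rw [hσ]; linarith
    have hSb : ∀ t : ℝ, ∀ N : ℕ, 1 ≤ N →
        ‖∑ n ∈ Finset.Ioc 0 N, cc k t n‖ ≤ C * (N:ℝ) ^ σ := by
      intro t N hN
      have h1 := hSbound (N:ℝ) (by exact_mod_cast hN) t
      rw [Nat.floor_natCast] at h1
      have h2 : Finset.Ioc 0 N = Finset.Icc 1 N := (Finset.Icc_add_one_left_eq_Ioc 0 N).symm
      rw [h2]
      exact h1
    have hF' : ∀ t : ℝ, Tendsto (fun N : ℕ => ∑ n ∈ Finset.Ioc 0 N, cc k t n / ((n:ℂ) ^ k))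
        atTop (𝓝 (F t)) := by
      intro t
      have h2 : ∀ N : ℕ, Finset.Ioc 0 N = Finset.Icc 1 N := fun N => (Finset.Icc_add_one_left_eq_Ioc 0 N).symm
      have := hF t
      refine this.congr fun N => ?_
      rw [h2 N]
      rfl
    obtain ⟨K, hK, hHold⟩ := holder_est k hk σ C hσ0 hσ1 hC F hSb hF'
    set α : ℝ := ((k:ℝ) - σ) / (k:ℝ) with hα
    have hα0 : 0 < α := by rw [hα]; apply div_pos; linarith; linarith
    have hα1 : α ≤ 1 := by
      rw [hα, div_le_one hk0]
      linarith
    have hgH : ∀ s ∈ Set.Icc (0:ℝ) 1, ∀ t ∈ Set.Icc (0:ℝ) 1, |g t - g s| ≤ K * |t - s| ^ α := by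
      intro s hs t ht
      simp only [Set.mem_Icc] at hs ht
      have hts : |t - s| ≤ 1 := abs_le.mpr ⟨by linarith [hs.1, ht.2], by linarith [hs.2, ht.1]⟩
      exact le_trans (hg t s) (hHold t s hts)
    refine le_trans (graph_dimH_le g α K hα0 hα1 hK.le hgH) ?_
    have he : (2:ℝ) - α = 1 + (1 - θ) / k + ε / k := by
      rw [hα, hσ]
      field_simp
      ring
    rw [he]
    have hεk : ε / k ≤ (δ:ℝ) := by
      rw [div_le_iff₀ hk0]
      calc ε ≤ (k:ℝ) * δ := min_le_right _ _
        _ = (δ:ℝ) * k := by ring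
    calc ENNReal.ofReal (1 + (1 - θ) / k + ε / k)
        ≤ ENNReal.ofReal (1 + (1 - θ) / k + (δ:ℝ)) := by
          apply ENNReal.ofReal_le_ofReal
          linarith
      _ = ENNReal.ofReal (1 + (1 - θ) / k) + ENNReal.ofReal (δ:ℝ) := by
          rw [ENNReal.ofReal_add]
          · have h0 : (0:ℝ) ≤ (1 - θ) / k := by
              apply div_nonneg <;> linarith
            linarith [h0]
          · exact hδ0.le
      _ = ENNReal.ofReal (1 + (1 - θ) / k) + (δ : ℝ≥0∞) := by
          rw [ENNReal.ofReal_coe_nnreal]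
  refine ⟨main (fun x => ‖F x‖) ?_, main (fun x => (F x).re) ?_,
    main (fun x => (F x).im) ?_⟩
  · intro t s
    show |‖F t‖ - ‖F s‖| ≤ ‖F t - F s‖
    exact abs_norm_sub_norm_le _ _
  · intro t s
    show |(F t).re - (F s).re| ≤ ‖F t - F s‖
    have h1 : (F t).re - (F s).re = (F t - F s).re := by simp [Complex.sub_re]
    rw [h1]
    exact Complex.abs_re_le_norm _
  · intro t s
    show |(F t).im - (F s).im| ≤ ‖F t - F s‖
    have h1 : (F t).im - (F s).im = (F t - F s).im := by simp [Complex.sub_im]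
    rw [h1]
    exact Complex.abs_im_le_norm _
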